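/- Let G be a Gδ semifilter with the Ramsey property. Then G is countably Ramsey: whenever A ∈ G and A = ⋃_{n<ω} A_n, either some A_n ∈ G, or there exists B ⊆ A with B ∈ G such that B ∩ A_n is finite for every n. -/
import Mathlib


def AlmostSubC (X Y : ℕ → Bool) : Prop :=
  ({n | X n = true} \ {n | Y n = true}).Finite

def IsSemifilterC (S : Set (ℕ → Bool)) : Prop :=
  S.Nonempty ∧ S ≠ Set.univ ∧ ∀ X Y : ℕ → Bool, X ∈ S → AlmostSubC X Y → Y ∈ S

/-- The Ramsey property for a semifilter `G ⊆ 2^ω`: if `A ∈ G` is a finite union,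
some piece is in `G`. -/
def RamseyPropC (G : Set (ℕ → Bool)) : Prop :=
  ∀ A ∈ G, ∀ (k : ℕ) (f : Fin k → ℕ → Bool),
    (∀ n : ℕ, A n = true ↔ ∃ i, f i n = true) → ∃ i, f i ∈ G

lemma cylinder_lemma {U : Set (ℕ → Bool)} (hU : IsOpen U) {x : ℕ → Bool} (hx : x ∈ U) :
    ∃ N : ℕ, ∀ y : ℕ → Bool, (∀ i < N, y i = x i) → y ∈ U := by
  rw [isOpen_pi_iff] at hU
  obtain ⟨I, u, h1, h2⟩ := hU x hx
  refine ⟨(I.sup id) + 1, fun y hy => h2 ?_⟩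
  intro i hi
  have hle : i ≤ I.sup id := Finset.le_sup (f := id) hi
  rw [hy i (Nat.lt_succ_of_le hle)]
  exact (h1 i hi).2

lemma gdelta_pseudo (G : Set (ℕ → Bool)) (hG : IsSemifilterC G) (hGδ : IsGδ G)
    (B : ℕ → ℕ → Bool) (hB : ∀ k, B k ∈ G)
    (hdec : ∀ k n, B (k+1) n = true → B k n = true) :
    ∃ C ∈ G, ∀ k, ({n | C n = true} \ {n | B k n = true}).Finite := by
  classical
  obtain ⟨T, hTopen, hTcount, hTeq⟩ := hGδ
  have hTne : T.Nonempty := by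
    rcases Set.eq_empty_or_nonempty T with h | h
    · exfalso; apply hG.2.1; rw [hTeq, h, Set.sInter_empty]
    · exact h
  obtain ⟨U, hUr⟩ := hTcount.exists_eq_range hTne
  have hGU : G = ⋂ n, U n := by rw [hTeq, hUr, Set.sInter_range]
  -- V k = intersection of U 0 .. U k
  set V : ℕ → Set (ℕ → Bool) := fun k => ⋂ j ∈ Finset.range (k+1), U j with hV
  have hVopen : ∀ k, IsOpen (V k) := by
    intro k
    exact isOpen_biInter_finset (fun j _ => hTopen _ (by rw [hUr]; exact ⟨j, rfl⟩))
  have hGV : ∀ k, G ⊆ V k := by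
    intro k x hx
    simp only [hV, Set.mem_iInter]
    intro j _
    rw [hGU] at hx
    exact Set.mem_iInter.1 hx j
  have hVG : (⋂ k, V k) ⊆ G := by
    rw [hGU]
    intro x hx
    refine Set.mem_iInter.2 fun k => ?_
    have := Set.mem_iInter.1 hx k
    simp only [hV, Set.mem_iInter] at this
    exact this k (Finset.self_mem_range_succ k)
  -- choice of cylinder length
  have key : ∀ (k : ℕ) (C : ℕ → Bool), C ∈ G →
      ∃ M, ∀ y : ℕ → Bool, (∀ i < M, y i = C i) → y ∈ V k :=
    fun k C hC => cylinder_lemma (hVopen k) (hGV k hC)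
  let pick : ℕ → (ℕ → Bool) → ℕ := fun k C => if h : C ∈ G then (key k C h).choose else 0
  have pick_spec : ∀ (k : ℕ) (C : ℕ → Bool) (h : C ∈ G),
      ∀ y : ℕ → Bool, (∀ i < pick k C, y i = C i) → y ∈ V k := by
    intro k C h y hy
    refine (key k C h).choose_spec y ?_
    intro i hi
    apply hy
    simpa [pick, dif_pos h] using hi
  -- the recursion
  let step : ℕ → (ℕ × (ℕ → Bool)) → ℕ × (ℕ → Bool) := fun k p =>
    (max (pick k p.2) (p.1 + 1),
     fun m => if m < max (pick k p.2) (p.1 + 1) then p.2 m else B (k+1) m)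
  let P : ℕ → ℕ × (ℕ → Bool) := fun k => Nat.rec (0, B 0) step k
  set N : ℕ → ℕ := fun k => (P k).1 with hN
  set C : ℕ → (ℕ → Bool) := fun k => (P k).2 with hC
  have hP0 : N 0 = 0 ∧ C 0 = B 0 := ⟨rfl, rfl⟩
  have hPs : ∀ k, N (k+1) = max (pick k (C k)) (N k + 1) ∧
      C (k+1) = fun m => if m < N (k+1) then C k m else B (k+1) m := fun k => ⟨rfl, rfl⟩
  have hNlt : ∀ k, N k < N (k+1) := by
    intro k; rw [(hPs k).1]; exact lt_of_lt_of_le (Nat.lt_succ_self _) (le_max_right _ _)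
  have hNmono : ∀ j k, j ≤ k → N j ≤ N k := by
    intro j k hjk
    induction k with
    | zero => simp_all
    | succ k ih =>
      rcases eq_or_lt_of_le hjk with h | h
      · subst h; exact le_refl _
      · exact le_trans (ih (Nat.lt_succ_iff.1 h)) (le_of_lt (hNlt k))
  have hNge : ∀ k, k ≤ N k := by
    intro k
    induction k with
    | zero => exact Nat.zero_le _
    | succ k ih => exact Nat.succ_le_of_lt (lt_of_le_of_lt ih (hNlt k))
  -- each C k is in G
  have hCG : ∀ k, C k ∈ G := by
    intro k
    cases k with
    | zero => exact hB 0
    | succ k =>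
      refine hG.2.2 (B (k+1)) _ (hB (k+1)) ?_
      apply Set.Finite.subset (Set.finite_Iio (N (k+1)))
      intro m hm
      simp only [Set.mem_diff, Set.mem_setOf_eq] at hm
      simp only [Set.mem_Iio]
      by_contra hlt
      push_neg at hlt
      apply hm.2
      rw [(hPs k).2]
      simp only [if_neg (not_lt.2 hlt)]
      exact hm.1
  -- cylinder property
  have hcyl : ∀ k, ∀ y : ℕ → Bool, (∀ i < N (k+1), y i = C k i) → y ∈ V k := by
    intro k y hy
    refine pick_spec k (C k) (hCG k) y fun i hi => hy i ?_
    exact lt_of_lt_of_le hi (by rw [(hPs k).1]; exact le_max_left _ _)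
  -- agreement
  have agree : ∀ j k m, k ≤ j → m < N (k+1) → C j m = C k m := by
    intro j
    induction j with
    | zero => intro k m hk _; interval_cases k; rfl
    | succ j ih =>
      intro k m hk hm
      rcases eq_or_lt_of_le hk with h | h
      · subst h; rfl
      · have hk' : k ≤ j := Nat.lt_succ_iff.1 h
        have : m < N (j+1) := lt_of_lt_of_le hm (hNmono _ _ (Nat.succ_le_succ hk'))
        rw [(hPs j).2]
        simp only [if_pos this]
        exact ih k m hk' hm
  set D : ℕ → Bool := fun m => C m m with hD
  have hDagree : ∀ k m, m < N (k+1) → D m = C k m := by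
    intro k m hm
    rcases le_or_gt k m with h | h
    · exact agree m k m h hm
    · exact (agree k m m (le_of_lt h) (lt_of_le_of_lt (hNge m) (hNlt m))).symm
  have hDV : ∀ k, D ∈ V k := fun k => hcyl k D (fun i hi => hDagree k i hi)
  have hDG : D ∈ G := hVG (Set.mem_iInter.2 hDV)
  -- B-bounds
  have hBmono : ∀ k j n, k ≤ j → B j n = true → B k n = true := by
    intro k j n hkj
    induction j with
    | zero => intro h; simp_all
    | succ j ih =>
      rcases eq_or_lt_of_le hkj with h | h
      · subst h; exact fun h => h
      · intro hb; exact ih (Nat.lt_succ_iff.1 h) (hdec j n hb)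
  have claimA : ∀ j m, C j m = true → m < N j ∨ B j m = true := by
    intro j
    induction j with
    | zero => intro m h; right; exact h
    | succ j ih =>
      intro m h
      rw [(hPs j).2] at h
      by_cases hm : m < N (j+1)
      · left; exact hm
      · right; simpa [if_neg hm] using h
  have claimB : ∀ k j m, k ≤ j → N k ≤ m → C j m = true → B k m = true := by
    intro k j
    induction j with
    | zero =>
      intro m hk hm h
      interval_cases k
      exact h
    | succ j ih =>
      intro m hk hm h
      rcases eq_or_lt_of_le hk with heq | hlt
      · subst heq
        rcases claimA (j+1) m h with h1 | h1
        · exact absurd hm (not_le.2 h1)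
        · exact h1
      · have hk' : k ≤ j := Nat.lt_succ_iff.1 hlt
        rw [(hPs j).2] at h
        by_cases hmN : m < N (j+1)
        · exact ih m hk' hm (by simpa [if_pos hmN] using h)
        · exact hBmono k (j+1) m hk (by simpa [if_neg hmN] using h)
  refine ⟨D, hDG, fun k => ?_⟩
  apply Set.Finite.subset (Set.finite_Iio (max (N k) k))
  intro m hm
  simp only [Set.mem_diff, Set.mem_setOf_eq] at hm
  simp only [Set.mem_Iio, lt_max_iff]
  by_contra hc
  push_neg at hc
  exact hm.2 (claimB k m m hc.2 hc.1 hm.1)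

/-- A `Gδ` semifilter with the Ramsey property is countably Ramsey: if `A ∈ G` is a
countable union `⋃ₙ Aₙ`, then either some `Aₙ ∈ G`, or some `B ⊆ A` with `B ∈ G`
meets every `Aₙ` finitely. -/
theorem gdelta_countably_ramsey (G : Set (ℕ → Bool)) (hG : IsSemifilterC G)
    (hGδ : IsGδ G) (hR : RamseyPropC G) :
    ∀ A ∈ G, ∀ f : ℕ → ℕ → Bool,
      (∀ n : ℕ, A n = true ↔ ∃ i : ℕ, f i n = true) →
      (∃ i : ℕ, f i ∈ G) ∨
        ∃ B ∈ G, (∀ n : ℕ, B n = true → A n = true) ∧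
          ∀ i : ℕ, {n | B n = true ∧ f i n = true}.Finite := by
  classical
  intro A hA f hcover
  by_cases hno : ∃ i : ℕ, f i ∈ G
  · exact Or.inl hno
  right
  push_neg at hno
  set Bs : ℕ → ℕ → Bool := fun k n => A n && decide (∀ i < k, f i n = false) with hBs
  have hBsG : ∀ k, Bs k ∈ G := by
    intro k
    set g : Fin (k+1) → ℕ → Bool :=
      Fin.cons (Bs k) (fun i n => f (i : ℕ) n && A n) with hg
    have hcov : ∀ n : ℕ, A n = true ↔ ∃ i : Fin (k+1), g i n = true := by
      intro n
      constructor
      · intro hAn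
        by_cases h : ∃ i < k, f i n = true
        · obtain ⟨i, hik, hfi⟩ := h
          refine ⟨(⟨i, hik⟩ : Fin k).succ, ?_⟩
          simp only [hg, Fin.cons_succ]
          simp [hfi, hAn]
        · push_neg at h
          refine ⟨0, ?_⟩
          simp only [hg, Fin.cons_zero, hBs]
          simp only [Bool.and_eq_true, decide_eq_true_iff]
          exact ⟨hAn, fun i hi => Bool.eq_false_iff.2 (h i hi)⟩
      · rintro ⟨i, hi⟩
        rcases Fin.eq_zero_or_eq_succ i with h0 | ⟨j, hj⟩
        · subst h0
          simp only [hg, Fin.cons_zero, hBs, Bool.and_eq_true] at hi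
          exact hi.1
        · subst hj
          simp only [hg, Fin.cons_succ, Bool.and_eq_true] at hi
          exact hi.2
    obtain ⟨i, hiG⟩ := hR A hA (k+1) g hcov
    rcases Fin.eq_zero_or_eq_succ i with h0 | ⟨j, hj⟩
    · subst h0; simpa [hg] using hiG
    · subst hj
      exfalso
      apply hno (j : ℕ)
      refine hG.2.2 _ _ (by simpa [hg] using hiG) ?_
      apply Set.Finite.subset Set.finite_empty
      intro n hn
      simp only [Set.mem_diff, Set.mem_setOf_eq, Bool.and_eq_true] at hn
      exact absurd hn.1.1 hn.2
  have hBsdec : ∀ k n, Bs (k+1) n = true → Bs k n = true := by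
    intro k n h
    simp only [hBs, Bool.and_eq_true, decide_eq_true_iff] at h ⊢
    exact ⟨h.1, fun i hi => h.2 i (Nat.lt_succ_of_lt hi)⟩
  obtain ⟨C, hCG, hfin⟩ := gdelta_pseudo G hG hGδ Bs hBsG hBsdec
  refine ⟨fun n => C n && A n, ?_, ?_, ?_⟩
  · refine hG.2.2 C _ hCG ?_
    apply Set.Finite.subset (hfin 0)
    intro n hn
    simp only [Set.mem_diff, Set.mem_setOf_eq, Bool.and_eq_true, not_and] at hn ⊢
    refine ⟨hn.1, ?_⟩
    intro hb
    simp only [hBs, Bool.and_eq_true, decide_eq_true_iff] at hb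
    exact hn.2 hn.1 hb.1
  · intro n hn
    simp only [Bool.and_eq_true] at hn
    exact hn.2
  · intro i
    apply Set.Finite.subset (hfin (i+1))
    intro n hn
    simp only [Set.mem_setOf_eq, Bool.and_eq_true] at hn
    simp only [Set.mem_diff, Set.mem_setOf_eq, Bool.and_eq_true]
    refine ⟨hn.1.1, ?_⟩
    intro hb
    simp only [hBs, Bool.and_eq_true, decide_eq_true_iff] at hb
    exact absurd hn.2 (by simp [hb.2 i (Nat.lt_succ_self i)])
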